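/- Fix j > 0 and h ≥ 0, and let 𝓕(z) = e^{-jz²/2}·H(-√j z) and 𝓤(z) = e^{-jz²/2}·H(√j z) with H(y) = ∫₀^∞ e^{-t²-2ty} t^h dt. Then the Wronskian W(𝓕,𝓤) = 𝓕'·𝓤 - 𝓕·𝓤' is constant in z and equals 2^{-h}·√(jπ)·Γ(h+1); in particular W > 0 and 𝓕, 𝓤 are linearly independent solutions. -/

import Mathlib

open MeasureTheory Real Set Filter

noncomputable def Mm (s y : ℝ) : ℝ := ∫ t in Ioi (0:ℝ), Real.exp (-t^2 - 2*t*y) * t ^ s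

lemma meas_f (s y : ℝ) : Measurable fun t : ℝ => Real.exp (-t^2 - 2*t*y) * t ^ s := by
  fun_prop

lemma integOn_f (s y : ℝ) (hs : -1 < s) :
    IntegrableOn (fun t => Real.exp (-t^2 - 2*t*y) * t ^ s) (Ioi 0) := by
  apply Integrable.mono'
    (((integrableOn_rpow_mul_exp_neg_mul_sq (by norm_num : (0:ℝ) < 1/2) hs)).const_mul
      (Real.exp (2*y^2)))
  · exact (meas_f s y).aestronglyMeasurable
  · filter_upwards [ae_restrict_mem measurableSet_Ioi] with t ht
    have ht' : (0:ℝ) < t := ht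
    have h1 : Real.exp (-t^2 - 2*t*y) ≤ Real.exp (2*y^2) * Real.exp (-(1/2) * t^2) := by
      rw [← Real.exp_add]
      apply Real.exp_le_exp.mpr
      nlinarith [sq_nonneg (t + 2*y)]
    have h2 : (0:ℝ) ≤ t ^ s := Real.rpow_nonneg ht'.le s
    rw [Real.norm_eq_abs, abs_mul, abs_of_nonneg (Real.exp_pos _).le, abs_of_nonneg h2]
    calc Real.exp (-t^2 - 2*t*y) * t ^ s
        ≤ (Real.exp (2*y^2) * Real.exp (-(1/2) * t^2)) * t ^ s := by
          exact mul_le_mul_of_nonneg_right h1 h2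
      _ = Real.exp (2*y^2) * (t ^ s * Real.exp (-(1/2) * t^2)) := by ring

lemma hasDerivAt_Mm (s : ℝ) (hs : -1 < s) (y : ℝ) :
    HasDerivAt (Mm s) (-2 * Mm (s+1) y) y := by
  have hs1 : (-1:ℝ) < s + 1 := by linarith
  have key := hasDerivAt_integral_of_dominated_loc_of_deriv_le (μ := volume.restrict (Ioi 0))
    (F := fun y t => Real.exp (-t^2 - 2*t*y) * t ^ s)
    (F' := fun y t => (-2) * (Real.exp (-t^2 - 2*t*y) * t ^ (s+1)))
    (x₀ := y) (s := Metric.ball y 1)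
    (bound := fun t => 2 * (Real.exp (-t^2 - 2*t*(y-1)) * t ^ (s+1)))
    (Metric.ball_mem_nhds y one_pos)
    (Eventually.of_forall fun y' => (meas_f s y').aestronglyMeasurable)
    (integOn_f s y hs)
    (((meas_f (s+1) y).const_mul (-2)).aestronglyMeasurable)
    ?_ (((integOn_f (s+1) (y-1) hs1).const_mul 2)) ?_
  · have h2 : (∫ t in Ioi (0:ℝ), (-2) * (Real.exp (-t^2 - 2*t*y) * t ^ (s+1)))
        = -2 * Mm (s+1) y := by
      rw [MeasureTheory.integral_const_mul]; rfl
    rw [← h2]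
    exact key.2
  · -- bound
    filter_upwards [ae_restrict_mem measurableSet_Ioi] with t ht
    intro x hx
    have ht' : (0:ℝ) < t := ht
    have hx' : y - 1 ≤ x := by
      have := abs_lt.mp (by simpa [Real.dist_eq] using Metric.mem_ball.mp hx)
      linarith [this.1]
    have h1 : Real.exp (-t^2 - 2*t*x) ≤ Real.exp (-t^2 - 2*t*(y-1)) := by
      apply Real.exp_le_exp.mpr
      nlinarith
    have h2 : (0:ℝ) ≤ t ^ (s+1) := Real.rpow_nonneg ht'.le _
    rw [norm_mul, Real.norm_eq_abs, Real.norm_eq_abs, abs_mul,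
      abs_of_nonneg (Real.exp_pos _).le, abs_of_nonneg h2]
    have : |(-2:ℝ)| = 2 := by norm_num
    rw [this]
    exact mul_le_mul_of_nonneg_left (mul_le_mul_of_nonneg_right h1 h2) (by norm_num)
  · -- differentiability
    filter_upwards [ae_restrict_mem measurableSet_Ioi] with t ht
    intro x hx
    have ht' : (0:ℝ) < t := ht
    have hu : HasDerivAt (fun y' : ℝ => -t^2 - 2*t*y') (-(2*t)) x := by
      simpa using ((hasDerivAt_id x).const_mul (2*t)).const_sub (-t^2)
    have := (hu.exp).mul_const (t ^ s)
    refine this.congr_deriv (Eq.symm ?_)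
    rw [Real.rpow_add_one ht'.ne']
    ring

lemma tendsto_f_atTop (s y : ℝ) :
    Tendsto (fun t => Real.exp (-t^2 - 2*t*y) * t ^ s) atTop (nhds 0) := by
  have hlim : Tendsto (fun t : ℝ => t ^ s * Real.exp (-(1/2) * t ^ 2)) atTop (nhds 0) :=
    (rpow_mul_exp_neg_mul_sq_isLittleO_exp_neg one_half_pos s).tendsto_zero_of_tendsto
      (Real.tendsto_exp_atBot.comp <| tendsto_id.const_mul_atTop_of_neg
        (neg_lt_zero.mpr one_half_pos))
  apply tendsto_of_tendsto_of_tendsto_of_le_of_le' tendsto_const_nhds hlim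
  · filter_upwards [eventually_ge_atTop (0:ℝ)] with t ht
    positivity
  · filter_upwards [eventually_ge_atTop (max 0 (-4*y))] with t ht
    have ht0 : (0:ℝ) ≤ t := le_trans (le_max_left _ _) ht
    have ht1 : -4*y ≤ t := le_trans (le_max_right _ _) ht
    have h1 : Real.exp (-t^2 - 2*t*y) ≤ Real.exp (-(1/2) * t^2) := by
      apply Real.exp_le_exp.mpr; nlinarith
    calc Real.exp (-t^2 - 2*t*y) * t ^ s ≤ Real.exp (-(1/2) * t^2) * t ^ s :=
          mul_le_mul_of_nonneg_right h1 (Real.rpow_nonneg ht0 s)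
      _ = t ^ s * Real.exp (-(1/2) * t^2) := mul_comm _ _

lemma ode_Mm (s y : ℝ) (hs : 0 < s) :
    -2 * Mm (s+1) y + (-2*y) * Mm s y + s * Mm (s-1) y = 0 := by
  have hs1 : (-1:ℝ) < s - 1 := by linarith
  have hs0 : (-1:ℝ) < s := by linarith
  have hs2 : (-1:ℝ) < s + 1 := by linarith
  set f : ℝ → ℝ := fun t => Real.exp (-t^2 - 2*t*y) * t ^ s with hf
  set g : ℝ → ℝ := fun t =>
    -2 * (Real.exp (-t^2 - 2*t*y) * t ^ (s+1)) + (-2*y) * (Real.exp (-t^2 - 2*t*y) * t ^ s)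
      + s * (Real.exp (-t^2 - 2*t*y) * t ^ (s-1)) with hg
  have hderiv : ∀ t ∈ Ioi (0:ℝ), HasDerivAt f (g t) t := by
    intro t ht
    have ht' : (0:ℝ) < t := ht
    have hu : HasDerivAt (fun t : ℝ => -t^2 - 2*t*y) (-(2*t) - 2*y) t := by
      have h1 : HasDerivAt (fun t : ℝ => -t^2) (-(2*t)) t := by
        simpa using ((hasDerivAt_pow 2 t).fun_neg)
      have h2 : HasDerivAt (fun t : ℝ => 2*t*y) (2*y) t := by
        simpa [mul_comm, mul_left_comm, mul_assoc] using ((hasDerivAt_id t).const_mul (2*y))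
      simpa using h1.fun_sub h2
    have hp : HasDerivAt (fun t : ℝ => t ^ s) (s * t ^ (s-1)) t :=
      Real.hasDerivAt_rpow_const (Or.inl ht'.ne')
    have := (hu.exp).fun_mul hp
    refine this.congr_deriv (Eq.symm ?_)
    rw [hg]
    simp only []
    rw [Real.rpow_add_one ht'.ne']
    ring
  have hint : IntegrableOn g (Ioi 0) := by
    exact (((integOn_f (s+1) y hs2).const_mul (-2)).add
      ((integOn_f s y hs0).const_mul (-2*y))).add ((integOn_f (s-1) y hs1).const_mul s)
  have hcont : ContinuousWithinAt f (Ici 0) 0 := by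
    apply ContinuousAt.continuousWithinAt
    have h1 : ContinuousAt (fun t : ℝ => t ^ s) 0 :=
      Real.continuousAt_rpow_const 0 s (Or.inr hs.le)
    exact (Real.continuous_exp.comp (by continuity)).continuousAt.mul h1
  have hf0 : f 0 = 0 := by
    simp [hf, Real.zero_rpow hs.ne']
  have htend : Tendsto f atTop (nhds 0) := tendsto_f_atTop s y
  have key := MeasureTheory.integral_Ioi_of_hasDerivAt_of_tendsto (m := 0) hcont hderiv hint htend
  · rw [hf0, sub_zero] at key
    have i1 := (integOn_f (s+1) y hs2).const_mul (-2)
    have i2 := (integOn_f s y hs0).const_mul (-2*y)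
    have i3 := (integOn_f (s-1) y hs1).const_mul s
    have hsplit : -2 * Mm (s+1) y + (-2*y) * Mm s y + s * Mm (s-1) y
        = ∫ t in Ioi (0:ℝ), g t := by
      simp only [Mm, ← MeasureTheory.integral_const_mul]
      have i12 : Integrable (fun t : ℝ =>
          -2 * (Real.exp (-t^2 - 2*t*y) * t ^ (s+1))
            + (-2*y) * (Real.exp (-t^2 - 2*t*y) * t ^ s)) (volume.restrict (Ioi 0)) :=
        i1.add i2
      rw [← MeasureTheory.integral_add i1 i2, ← MeasureTheory.integral_add i12 i3]
    rw [hsplit, key]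
lemma Mm_zero (q : ℝ) (hq : -1 < q) : Mm q 0 = (1/2) * Real.Gamma ((q+1)/2) := by
  have h1 : Mm q 0 = ∫ t in Ioi (0:ℝ), t ^ q * Real.exp (-t ^ (2:ℝ)) := by
    unfold Mm
    refine setIntegral_congr_fun measurableSet_Ioi fun t ht => ?_
    rw [Real.rpow_two]
    ring_nf
  rw [h1, integral_rpow_mul_exp_neg_rpow two_pos hq]

lemma phi_hasDerivAt (h : ℝ) (hh : 0 ≤ h) (a : ℝ) :
    HasDerivAt (fun a => Real.exp (-a^2) *
      (Mm (h+1) (-a) * Mm h a + Mm h (-a) * Mm (h+1) a)) 0 a := by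
  have hh0 : (-1:ℝ) < h := by linarith
  have hh1 : (-1:ℝ) < h + 1 := by linarith
  have hneg : HasDerivAt (fun a : ℝ => -a) (-1 : ℝ) a := (hasDerivAt_id a).neg
  have hE : HasDerivAt (fun a : ℝ => Real.exp (-a^2)) (-(2*a) * Real.exp (-a^2)) a := by
    have h1 : HasDerivAt (fun a : ℝ => -a^2) (-(2*a)) a := by
      simpa using (hasDerivAt_pow 2 a).fun_neg
    simpa [mul_comm] using h1.exp
  have hBa : HasDerivAt (Mm h) (-2 * Mm (h+1) a) a := hasDerivAt_Mm h hh0 a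
  have hAa : HasDerivAt (Mm (h+1)) (-2 * Mm (h+1+1) a) a := hasDerivAt_Mm (h+1) hh1 a
  have hBn : HasDerivAt (fun a : ℝ => Mm h (-a)) ((-2 * Mm (h+1) (-a)) * (-1)) a :=
    (hasDerivAt_Mm h hh0 (-a)).comp a hneg
  have hAn : HasDerivAt (fun a : ℝ => Mm (h+1) (-a)) ((-2 * Mm (h+1+1) (-a)) * (-1)) a :=
    (hasDerivAt_Mm (h+1) hh1 (-a)).comp a hneg
  have hS : HasDerivAt (fun a : ℝ => Mm (h+1) (-a) * Mm h a + Mm h (-a) * Mm (h+1) a)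
      (((-2 * Mm (h+1+1) (-a)) * (-1)) * Mm h a + Mm (h+1) (-a) * (-2 * Mm (h+1) a)
        + (((-2 * Mm (h+1) (-a)) * (-1)) * Mm (h+1) a + Mm h (-a) * (-2 * Mm (h+1+1) a))) a :=
    (hAn.fun_mul hBa).fun_add (hBn.fun_mul hAa)
  have htot := hE.fun_mul hS
  refine htot.congr_deriv (Eq.symm ?_)
  have ode1 := ode_Mm (h+1) a (by linarith)
  have ode2 := ode_Mm (h+1) (-a) (by linarith)
  have e1 : h + 1 - 1 = h := by ring
  rw [e1] at ode1 ode2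
  linear_combination (Real.exp (-a^2) * Mm h a) * ode2
    + (- Real.exp (-a^2) * Mm h (-a)) * ode1

/-- The Wronskian of `𝓕(z) = e^{-jz²/2} H(-√j z)` and `𝓤(z) = e^{-jz²/2} H(√j z)`, where
`H(y) = ∫₀^∞ e^{-t²-2ty} t^h dt`, is constant in `z` and equals `2^{-h} √(jπ) Γ(h+1) > 0`;
in particular `𝓕` and `𝓤` are linearly independent. -/
theorem stmt_4 (j h : ℝ) (hj : 0 < j) (hh : 0 ≤ h)
    (H F U : ℝ → ℝ)
    (hH : ∀ y, H y = ∫ t in Set.Ioi (0:ℝ), Real.exp (-t^2 - 2*t*y) * t ^ h)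
    (hF : ∀ z, F z = Real.exp (-j*z^2/2) * H (-(Real.sqrt j * z)))
    (hU : ∀ z, U z = Real.exp (-j*z^2/2) * H (Real.sqrt j * z)) :
    (∀ z : ℝ, deriv F z * U z - F z * deriv U z
        = (2:ℝ) ^ (-h) * Real.sqrt (j * Real.pi) * Real.Gamma (h+1)) ∧
    0 < (2:ℝ) ^ (-h) * Real.sqrt (j * Real.pi) * Real.Gamma (h+1) ∧
    LinearIndependent ℝ ![F, U] := by
  have hh0 : (-1:ℝ) < h := by linarith
  have hHM : ∀ y, H y = Mm h y := fun y => hH y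
  set c := Real.sqrt j with hc
  have hc0 : 0 < c := Real.sqrt_pos.mpr hj
  have hc2 : c^2 = j := Real.sq_sqrt hj.le
  -- the constant φ
  set φ : ℝ → ℝ := fun a => Real.exp (-a^2) *
      (Mm (h+1) (-a) * Mm h a + Mm h (-a) * Mm (h+1) a) with hφdef
  have hφ : ∀ a, HasDerivAt φ 0 a := phi_hasDerivAt h hh
  have hφconst : ∀ a, φ a = φ 0 := fun a =>
    is_const_of_deriv_eq_zero (fun x => (hφ x).differentiableAt) (fun x => (hφ x).deriv) a 0
  have hφ0 : φ 0 = (1/2) * Real.Gamma ((h+2)/2) * Real.Gamma ((h+1)/2) := by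
    have e2 : h + 1 + 1 = h + 2 := by ring
    simp only [hφdef, neg_zero]
    have e4 : Real.exp (-(0:ℝ)^2) = 1 := by norm_num
    rw [Mm_zero h hh0, Mm_zero (h+1) (by linarith), e2, e4]
    ring
  -- the constant W value
  have hW0 : 2 * c * φ 0 = (2:ℝ) ^ (-h) * Real.sqrt (j * Real.pi) * Real.Gamma (h+1) := by
    rw [hφ0]
    have dup := Real.Gamma_mul_Gamma_add_half ((h+1)/2)
    have e1 : (h+1)/2 + 1/2 = (h+2)/2 := by ring
    have e2 : 2 * ((h+1)/2) = h + 1 := by ring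
    rw [e1, e2] at dup
    have e3 : (1:ℝ) - (h+1) = -h := by ring
    rw [e3] at dup
    rw [Real.sqrt_mul hj.le, ← hc]
    linear_combination c * dup
  -- derivatives of F and U
  have hFe : F = fun z => Real.exp (-j*z^2/2) * Mm h (-(c*z)) :=
    funext fun z => by rw [hF z, hHM]
  have hUe : U = fun z => Real.exp (-j*z^2/2) * Mm h (c*z) :=
    funext fun z => by rw [hU z, hHM]
  have hE : ∀ z : ℝ, HasDerivAt (fun z : ℝ => Real.exp (-j*z^2/2))
      (-(j*z) * Real.exp (-j*z^2/2)) z := by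
    intro z
    have hin : HasDerivAt (fun z : ℝ => -j*z^2/2) (-(j*z)) z := by
      have := ((hasDerivAt_pow 2 z).const_mul (-j)).div_const 2
      refine this.congr_deriv (Eq.symm ?_)
      norm_num
      ring
    simpa [mul_comm] using hin.exp
  have hlinn : ∀ z : ℝ, HasDerivAt (fun z : ℝ => -(c*z)) (-c) z := by
    intro z
    simpa using ((hasDerivAt_id z).const_mul c).fun_neg
  have hlinp : ∀ z : ℝ, HasDerivAt (fun z : ℝ => c*z) c z := by
    intro z
    simpa using ((hasDerivAt_id z).const_mul c)
  have hFz : ∀ z : ℝ, HasDerivAt F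
      (-(j*z) * Real.exp (-j*z^2/2) * Mm h (-(c*z))
        + Real.exp (-j*z^2/2) * ((-2 * Mm (h+1) (-(c*z))) * (-c))) z := by
    intro z
    rw [hFe]
    exact (hE z).fun_mul (HasDerivAt.comp (h₂ := Mm h) (h := fun z => -(c*z)) z (hasDerivAt_Mm h hh0 (-(c*z))) (hlinn z))
  have hUz : ∀ z : ℝ, HasDerivAt U
      (-(j*z) * Real.exp (-j*z^2/2) * Mm h (c*z)
        + Real.exp (-j*z^2/2) * ((-2 * Mm (h+1) (c*z)) * c)) z := by
    intro z
    rw [hUe]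
    exact (hE z).fun_mul ((hasDerivAt_Mm h hh0 (c*z)).comp z (hlinp z))
  have wkey : ∀ z : ℝ, deriv F z * U z - F z * deriv U z
      = (2:ℝ) ^ (-h) * Real.sqrt (j * Real.pi) * Real.Gamma (h+1) := by
    intro z
    rw [(hFz z).deriv, (hUz z).deriv]
    have hUv : U z = Real.exp (-j*z^2/2) * Mm h (c*z) := by rw [hUe]
    have hFv : F z = Real.exp (-j*z^2/2) * Mm h (-(c*z)) := by rw [hFe]
    rw [hUv, hFv, ← hW0, ← hφconst (c*z)]
    have eE : Real.exp (-j*z^2/2) * Real.exp (-j*z^2/2) = Real.exp (-(c*z)^2) := by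
      rw [← Real.exp_add]
      congr 1
      rw [mul_pow, hc2]
      ring
    simp only [hφdef]
    linear_combination (2*c*(Mm (h+1) (-(c*z)) * Mm h (c*z)
      + Mm h (-(c*z)) * Mm (h+1) (c*z))) * eE
  have hGpos : 0 < Real.Gamma (h+1) := Real.Gamma_pos_of_pos (by linarith)
  have hKpos : 0 < (2:ℝ) ^ (-h) * Real.sqrt (j * Real.pi) * Real.Gamma (h+1) := by
    have h1 : (0:ℝ) < (2:ℝ) ^ (-h) := Real.rpow_pos_of_pos two_pos _
    have h2 : (0:ℝ) < Real.sqrt (j * Real.pi) :=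
      Real.sqrt_pos.mpr (mul_pos hj Real.pi_pos)
    exact mul_pos (mul_pos h1 h2) hGpos
  refine ⟨wkey, hKpos, ?_⟩
  rw [linearIndependent_fin2]
  constructor
  · simp only [Matrix.cons_val_one, Matrix.head_cons, Matrix.cons_val_zero]
    intro h0
    have hU0 : U 0 = 0 := by rw [h0]; rfl
    rw [hUe] at hU0
    simp only [mul_zero] at hU0
    rw [Mm_zero h hh0] at hU0
    have : (0:ℝ) < Real.exp (-j*0^2/2) * (1/2 * Real.Gamma ((h+1)/2)) := by
      have := Real.Gamma_pos_of_pos (show (0:ℝ) < (h+1)/2 by linarith)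
      positivity
    linarith
  · intro a
    simp only [Matrix.cons_val_one, Matrix.head_cons, Matrix.cons_val_zero]
    intro heq
    have hsmul : a • U = fun z => a * U z := by
      funext z; simp
    have hde : deriv F 0 = a * deriv U 0 := by
      rw [← heq, hsmul, (HasDerivAt.deriv ((hUz 0).const_mul a)), (hUz 0).deriv]
    have hF0 : F 0 = a * U 0 := by
      rw [← heq, hsmul]
    have hz := wkey 0
    rw [hde, hF0] at hz
    have : a * deriv U 0 * U 0 - a * U 0 * deriv U 0 = 0 := by ring
    linarith
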